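/- Let R be a discrete valuation ring with uniformizer π, f ∈ R[X] monic, g_(1),...,g_(n) ∈ R[X] monic of degree ≥ 1 with t := val_π(Res(g_(1),...,g_(n))) finite, s ≥ 2t+1, f ≡ ∏_k g_(k) mod π^s, and r ∈ [0, s−2t]. Suppose g̃_(1),...,g̃_(n), h̃_(1),...,h̃_(n) ∈ R[X] are monic with g̃_(k) ≡ g_(k) ≡ h̃_(k) mod π^{s−t} for all k, and ∏_k g̃_(k) ≡ ∏_k h̃_(k) mod π^{2(s−t)−r}. Then g̃_(k) ≡ h̃_(k) mod π^{2s−3t−r} for all k ∈ [1,n]. -/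

import Mathlib

open Polynomial Finset

theorem aux_C_pow_dvd {S : Type*} [CommRing S] (x : S) {a b : ℕ} (h : a ≤ b) :
    (C (x ^ a) : Polynomial S) ∣ C (x ^ b) :=
  ⟨C (x ^ (b - a)), by rw [← Polynomial.C_mul, ← pow_add, Nat.add_sub_cancel' h]⟩

theorem aux_dvd_prod_sub_prod {S : Type*} [CommRing S] {ι : Type*} [DecidableEq ι]
    (s : Finset ι) (a b : ι → S) (c : S) (h : ∀ i ∈ s, c ∣ a i - b i) :
    c ∣ (∏ i ∈ s, a i) - ∏ i ∈ s, b i := by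
  induction s using Finset.cons_induction with
  | empty => simp
  | cons i s hi ih =>
    rw [Finset.prod_cons, Finset.prod_cons]
    have h1 : c ∣ a i - b i := h i (Finset.mem_cons_self i s)
    have h2 : c ∣ (∏ j ∈ s, a j) - ∏ j ∈ s, b j := ih fun j hj => h j (Finset.mem_cons_of_mem hj)
    have key : a i * ∏ j ∈ s, a j - b i * ∏ j ∈ s, b j
        = (a i - b i) * ∏ j ∈ s, a j + b i * ((∏ j ∈ s, a j) - ∏ j ∈ s, b j) := by ring
    rw [key]
    exact dvd_add (h1.mul_right _) (h2.mul_left _)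

theorem aux_sq_dvd {S : Type*} [CommRing S] {ι : Type*} [DecidableEq ι]
    (s : Finset ι) (a b : ι → S) (c : S) (h : ∀ i ∈ s, c ∣ a i - b i) :
    c ^ 2 ∣ (∏ i ∈ s, a i) - (∏ i ∈ s, b i) - ∑ i ∈ s, (a i - b i) * ∏ j ∈ s.erase i, b j := by
  induction s using Finset.cons_induction with
  | empty => simp
  | cons i s hi ih =>
    have h1 : c ∣ a i - b i := h i (Finset.mem_cons_self i s)
    have hmem : ∀ j ∈ s, c ∣ a j - b j := fun j hj => h j (Finset.mem_cons_of_mem hj)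
    have hS : c ∣ ∑ k ∈ s, (a k - b k) * ∏ j ∈ s.erase k, b j :=
      Finset.dvd_sum fun k hk => ((hmem k hk).mul_right _)
    rw [Finset.prod_cons, Finset.prod_cons, Finset.sum_cons, Finset.erase_cons hi]
    have hrw : ∑ k ∈ s, (a k - b k) * ∏ j ∈ (Finset.cons i s hi).erase k, b j
        = b i * ∑ k ∈ s, (a k - b k) * ∏ j ∈ s.erase k, b j := by
      rw [Finset.mul_sum]
      refine Finset.sum_congr rfl fun k hk => ?_
      have hik : i ≠ k := fun hik => hi (hik ▸ hk)
      rw [Finset.cons_eq_insert, Finset.erase_insert_of_ne hik,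
        Finset.prod_insert (fun hmem' => hi (Finset.mem_of_mem_erase hmem'))]
      ring
    rw [hrw]
    have key : a i * ∏ j ∈ s, a j - b i * ∏ j ∈ s, b j -
        ((a i - b i) * ∏ j ∈ s, b j + b i * ∑ k ∈ s, (a k - b k) * ∏ j ∈ s.erase k, b j)
        = a i * ((∏ j ∈ s, a j) - (∏ j ∈ s, b j) - ∑ k ∈ s, (a k - b k) * ∏ j ∈ s.erase k, b j)
          + (a i - b i) * ∑ k ∈ s, (a k - b k) * ∏ j ∈ s.erase k, b j := by ring
    rw [key]
    refine dvd_add ((ih hmem).mul_left _) ?_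
    rw [sq]
    exact mul_dvd_mul h1 hS

theorem aux_sub_coeff_eq_zero {S : Type*} [CommRing S] {p q : Polynomial S} {c : S}
    (hp : p.Monic) (hq : q.Monic) (hc : ¬ IsUnit c) (hdvd : C c ∣ p - q) :
    ∀ i, q.natDegree ≤ i → (p - q).coeff i = 0 := by
  have hco := (Polynomial.C_dvd_iff_dvd_coeff c _).mp hdvd
  have hdeg : p.natDegree = q.natDegree := by
    by_contra hne
    rcases Nat.lt_or_ge p.natDegree q.natDegree with hlt | hge
    · have h1 : (p - q).coeff q.natDegree = -1 := by
        rw [Polynomial.coeff_sub, Polynomial.coeff_eq_zero_of_natDegree_lt hlt,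
          hq.coeff_natDegree]; ring
      exact hc (isUnit_of_dvd_unit (h1 ▸ hco q.natDegree) (IsUnit.neg isUnit_one))
    · have hlt : q.natDegree < p.natDegree := lt_of_le_of_ne hge (Ne.symm hne)
      have h1 : (p - q).coeff p.natDegree = 1 := by
        rw [Polynomial.coeff_sub, Polynomial.coeff_eq_zero_of_natDegree_lt hlt,
          hp.coeff_natDegree]; ring
      exact hc (isUnit_of_dvd_unit (h1 ▸ hco p.natDegree) isUnit_one)
  intro i hi
  rcases eq_or_lt_of_le hi with rfl | hlt
  · rw [Polynomial.coeff_sub, ← hdeg, hp.coeff_natDegree, hdeg, hq.coeff_natDegree, sub_self]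
  · rw [Polynomial.coeff_sub, Polynomial.coeff_eq_zero_of_natDegree_lt (hdeg ▸ hlt),
      Polynomial.coeff_eq_zero_of_natDegree_lt hlt, sub_self]

theorem aux_coeff_mul_fin {S : Type*} [CommRing S] (a b : Polynomial S) (m N : ℕ)
    (ha : ∀ i, m ≤ i → a.coeff i = 0) :
    (a * b).coeff N = ∑ i : Fin m, if (i : ℕ) ≤ N then a.coeff i * b.coeff (N - i) else 0 := by
  have h1 : (a * b).coeff N
      = ∑ i ∈ Finset.range (N + 1 + m), (if i ≤ N then a.coeff i * b.coeff (N - i) else 0) := by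
    rw [Polynomial.coeff_mul, Finset.Nat.sum_antidiagonal_eq_sum_range_succ_mk]
    rw [← Finset.sum_subset (Finset.range_subset_range.mpr (Nat.le_add_right (N + 1) m))
      (f := fun i => if i ≤ N then a.coeff i * b.coeff (N - i) else 0)
      (fun i _ hi => if_neg (fun hle => hi (Finset.mem_range.mpr (Nat.lt_succ_of_le hle))))]
    exact Finset.sum_congr rfl fun k hk =>
      (if_pos (Nat.lt_succ_iff.mp (Finset.mem_range.mp hk))).symm
  have h2 : (∑ i : Fin m, if (i : ℕ) ≤ N then a.coeff i * b.coeff (N - i) else 0)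
      = ∑ i ∈ Finset.range (N + 1 + m), (if i ≤ N then a.coeff i * b.coeff (N - i) else 0) := by
    rw [Fin.sum_univ_eq_sum_range (fun i => if i ≤ N then a.coeff i * b.coeff (N - i) else 0) m]
    refine Finset.sum_subset (Finset.range_subset_range.mpr (by omega)) (fun i _ hi => ?_)
    have hm : m ≤ i := Nat.le_of_not_lt (fun h => hi (Finset.mem_range.mpr h))
    by_cases h : i ≤ N
    · rw [if_pos h, ha i hm, zero_mul]
    · exact if_neg h
  rw [h1, h2]

/-- The global column position of an index in the block-structured resultant matrix. -/
def resPos {n : ℕ} {m : Fin n → ℕ} (q : (k : Fin n) × Fin (m k)) : ℕ :=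
  (∑ j ∈ Finset.univ.filter (fun j => j < q.1), m j) + (q.2 : ℕ)

/-- The matrix `A(g_(1), …, g_(n))` whose block of `deg g_(k)` rows consists of the
successively shifted coefficient rows of `∏_{j ≠ k} g_(j)`. -/
noncomputable def resMatrix {R : Type*} [CommRing R] {n : ℕ} (g : Fin n → Polynomial R) :
    Matrix ((k : Fin n) × Fin ((g k).natDegree)) ((k : Fin n) × Fin ((g k).natDegree)) R :=
  fun p q =>
    if (p.2 : ℕ) ≤ resPos q then
      (∏ j ∈ Finset.univ.erase p.1, g j).coeff (resPos q - (p.2 : ℕ))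
    else 0

/-- The generalized resultant `Res(g_(1), …, g_(n)) = det A(g_(1), …, g_(n))`. -/
noncomputable def genRes {R : Type*} [CommRing R] {n : ℕ} (g : Fin n → Polynomial R) : R :=
  (resMatrix g).det

/-- **Uniqueness estimate for lifts (general case):** if `g̃_(k) ≡ g_(k) ≡ h̃_(k) mod π^{s−t}`
for all `k` and `∏_k g̃_(k) ≡ ∏_k h̃_(k) mod π^{2(s−t)−r}` with `r ∈ [0, s−2t]`, then
`g̃_(k) ≡ h̃_(k) mod π^{2s−3t−r}` for all `k`. -/
theorem hensel_step_uniqueness_general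
    {R : Type*} [CommRing R] [IsDomain R] [IsDiscreteValuationRing R]
    (π : R) (hπ : Irreducible π)
    (f : Polynomial R) (hf : f.Monic)
    {n : ℕ} (g : Fin n → Polynomial R)
    (hmonic : ∀ k, (g k).Monic) (hdeg : ∀ k, 1 ≤ (g k).natDegree)
    (t : ℕ) (ht : π ^ t ∣ genRes g ∧ ¬ π ^ (t + 1) ∣ genRes g)
    (s : ℕ) (hs : 2 * t + 1 ≤ s)
    (hcongr : C (π ^ s) ∣ (f - ∏ k, g k))
    (r : ℕ) (hr : r ≤ s - 2 * t)
    (g' h' : Fin n → Polynomial R)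
    (hg'monic : ∀ k, (g' k).Monic) (hh'monic : ∀ k, (h' k).Monic)
    (hg' : ∀ k, C (π ^ (s - t)) ∣ (g' k - g k))
    (hh' : ∀ k, C (π ^ (s - t)) ∣ (h' k - g k))
    (hprod : C (π ^ (2 * (s - t) - r)) ∣ ((∏ k, g' k) - ∏ k, h' k)) :
    ∀ k, C (π ^ (2 * s - 3 * t - r)) ∣ (g' k - h' k) := by
  classical
  have hπ0 : π ≠ 0 := hπ.ne_zero
  have hrt : r + 2 * t ≤ s := by omega
  have hcu : ¬ IsUnit (π ^ (s - t)) := by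
    rw [isUnit_pow_iff (show s - t ≠ 0 by omega)]
    exact hπ.not_isUnit
  -- coefficient vanishing for differences
  have hgc : ∀ k i, (g k).natDegree ≤ i → (g' k - g k).coeff i = 0 := fun k =>
    aux_sub_coeff_eq_zero (hg'monic k) (hmonic k) hcu (hg' k)
  have hhc : ∀ k i, (g k).natDegree ≤ i → (h' k - g k).coeff i = 0 := fun k =>
    aux_sub_coeff_eq_zero (hh'monic k) (hmonic k) hcu (hh' k)
  have hδc : ∀ k i, (g k).natDegree ≤ i → (g' k - h' k).coeff i = 0 := by
    intro k i hi
    have e : g' k - h' k = (g' k - g k) - (h' k - g k) := by ring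
    rw [e, Polynomial.coeff_sub, hgc k i hi, hhc k i hi, sub_self]
  have hδdvd : ∀ k, C (π ^ (s - t)) ∣ g' k - h' k := by
    intro k
    have h0 := dvd_sub (hg' k) (hh' k)
    rwa [sub_sub_sub_cancel_right] at h0
  choose ε hε using hδdvd
  have hεc : ∀ k i, (g k).natDegree ≤ i → (ε k).coeff i = 0 := by
    intro k i hi
    have h0 := hδc k i hi
    rw [hε k, Polynomial.coeff_C_mul] at h0
    exact (mul_eq_zero.mp h0).resolve_left (pow_ne_zero _ hπ0)
  set P : Polynomial R := ∑ k, ε k * ∏ j ∈ Finset.univ.erase k, g j with hP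
  -- product congruences
  have hA := aux_sq_dvd Finset.univ g' g (C (π ^ (s - t))) (fun k _ => hg' k)
  have hB := aux_sq_dvd Finset.univ h' g (C (π ^ (s - t))) (fun k _ => hh' k)
  have hAB : C (π ^ (s - t)) ^ 2 ∣
      ((∏ k, g' k) - ∏ k, h' k) - ∑ k, (g' k - h' k) * ∏ j ∈ Finset.univ.erase k, g j := by
    have h0 := dvd_sub hA hB
    have e2 : (∑ k, (g' k - g k) * ∏ j ∈ Finset.univ.erase k, g j)
        - ∑ k, (h' k - g k) * ∏ j ∈ Finset.univ.erase k, g j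
        = ∑ k, (g' k - h' k) * ∏ j ∈ Finset.univ.erase k, g j := by
      rw [← Finset.sum_sub_distrib]
      exact Finset.sum_congr rfl fun k _ => by ring
    have e : ((∏ k, g' k) - (∏ k, g k) - ∑ k, (g' k - g k) * ∏ j ∈ Finset.univ.erase k, g j)
        - ((∏ k, h' k) - (∏ k, g k) - ∑ k, (h' k - g k) * ∏ j ∈ Finset.univ.erase k, g j)
        = ((∏ k, g' k) - ∏ k, h' k)
          - ∑ k, (g' k - h' k) * ∏ j ∈ Finset.univ.erase k, g j := by
      rw [← e2]; ring
    rwa [e] at h0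
  have hsum : C (π ^ (2 * (s - t) - r)) ∣
      ∑ k, (g' k - h' k) * ∏ j ∈ Finset.univ.erase k, g j := by
    have hsq : (C (π ^ (s - t)) : Polynomial R) ^ 2 = C (π ^ (2 * (s - t))) := by
      rw [← Polynomial.C_pow, ← pow_mul, Nat.mul_comm]
    have h2 : C (π ^ (2 * (s - t) - r)) ∣
        ((∏ k, g' k) - ∏ k, h' k)
          - ∑ k, (g' k - h' k) * ∏ j ∈ Finset.univ.erase k, g j :=
      dvd_trans (aux_C_pow_dvd π (by omega)) (hsq ▸ hAB)
    have h0 := dvd_sub hprod h2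
    rwa [sub_sub_cancel] at h0
  have hPdvd : C (π ^ (s - t - r)) ∣ P := by
    have e3 : ∑ k, (g' k - h' k) * ∏ j ∈ Finset.univ.erase k, g j
        = C (π ^ (s - t)) * P := by
      rw [hP, Finset.mul_sum]
      exact Finset.sum_congr rfl fun k _ => by rw [hε k]; ring
    rw [e3] at hsum
    have e4 : (C (π ^ (2 * (s - t) - r)) : Polynomial R)
        = C (π ^ (s - t)) * C (π ^ (s - t - r)) := by
      rw [← Polynomial.C_mul, ← pow_add]
      have : s - t + (s - t - r) = 2 * (s - t) - r := by omega
      rw [this]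
    rw [e4] at hsum
    exact (mul_dvd_mul_iff_left
      (show (C (π ^ (s - t)) : Polynomial R) ≠ 0 from
        Polynomial.C_ne_zero.mpr (pow_ne_zero _ hπ0))).mp hsum
  have hPco : ∀ N, π ^ (s - t - r) ∣ P.coeff N :=
    (Polynomial.C_dvd_iff_dvd_coeff _ _).mp hPdvd
  -- the vector of coefficients of the ε's
  set W : ((k : Fin n) × Fin ((g k).natDegree)) → R := fun p => (ε p.1).coeff p.2 with hW
  have hvec : ∀ q, Matrix.vecMul W (resMatrix g) q = P.coeff (resPos q) := by
    intro q
    rw [hP, Polynomial.finset_sum_coeff]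
    rw [Matrix.vecMul, dotProduct]
    rw [← Finset.univ_sigma_univ, Finset.sum_sigma]
    refine Finset.sum_congr rfl fun k _ => ?_
    rw [aux_coeff_mul_fin (ε k) _ ((g k).natDegree) (resPos q) (hεc k)]
    refine Finset.sum_congr rfl fun i _ => ?_
    simp only [hW, resMatrix, mul_ite, mul_zero]
  have hvecdvd : ∀ q, π ^ (s - t - r) ∣ Matrix.vecMul W (resMatrix g) q := fun q =>
    (hvec q) ▸ hPco (resPos q)
  have hmain : ∀ q, π ^ (s - t - r) ∣ genRes g * W q := by
    intro q
    have h5 : Matrix.vecMul W (resMatrix g * (resMatrix g).adjugate) q = genRes g * W q := by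
      rw [Matrix.mul_adjugate]
      simp [Matrix.vecMul, dotProduct, Matrix.smul_apply, Matrix.one_apply, mul_ite,
        mul_zero, mul_comm, genRes]
    rw [← h5, ← Matrix.vecMul_vecMul]
    exact Finset.dvd_sum fun p _ => ((hvecdvd p).mul_right _)
  -- extract the unit
  have hres0 : genRes g ≠ 0 := fun h0 => ht.2 (h0 ▸ dvd_zero _)
  obtain ⟨m0, u, hu⟩ := IsDiscreteValuationRing.eq_unit_mul_pow_irreducible hres0 hπ
  have hm0 : m0 ≤ t := by
    by_contra hc
    refine ht.2 ?_
    rw [hu]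
    exact (pow_dvd_pow π (show t + 1 ≤ m0 by omega)).mul_left _
  have hWdvd : ∀ p, π ^ (s - 2 * t - r) ∣ W p := by
    intro p
    have h7 := hmain p
    rw [hu] at h7
    have h8 : π ^ (m0 + (s - 2 * t - r)) ∣ π ^ m0 * (↑u * W p) := by
      refine dvd_trans (pow_dvd_pow π (show m0 + (s - 2 * t - r) ≤ s - t - r by omega)) ?_
      rw [show (π : R) ^ m0 * (↑u * W p) = ↑u * π ^ m0 * W p by ring]
      exact h7
    rw [pow_add] at h8
    exact Units.dvd_mul_left.mp ((mul_dvd_mul_iff_left (pow_ne_zero m0 hπ0)).mp h8)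
  intro k
  rw [hε k]
  have e5 : (C (π ^ (2 * s - 3 * t - r)) : Polynomial R)
      = C (π ^ (s - t)) * C (π ^ (s - 2 * t - r)) := by
    rw [← Polynomial.C_mul, ← pow_add]
    have : s - t + (s - 2 * t - r) = 2 * s - 3 * t - r := by omega
    rw [this]
  rw [e5]
  refine mul_dvd_mul_left _ ?_
  rw [Polynomial.C_dvd_iff_dvd_coeff]
  intro i
  by_cases hi : i < (g k).natDegree
  · exact hWdvd ⟨k, ⟨i, hi⟩⟩
  · rw [hεc k i (le_of_not_gt hi)]
    exact dvd_zero _
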